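/- Let s be a canonical unimodular function on 𝕋, i.e., the only pair (h_+, h_-) ∈ H² × H²_- with conj(s)h_+ = h_- is (0,0). Suppose D, D' ∈ H² are outer functions with D(0) > 0, D'(0) > 0, ∫|D|² dm = ∫|D'|² dm = 1, and there exist unimodular constants α, α' ∈ 𝕋 with s = -conj(α)·D/conj(D) = -conj(α')·D'/conj(D') a.e. on 𝕋. Then D = D' and α = α'. -/

import Mathlib

open MeasureTheory AddCircle Complex ComplexConjugate

instance : Fact (0 < 2 * Real.pi) := ⟨by positivity⟩

/-- The Hardy space condition: `f ∈ L²(𝕋)` with vanishing negative Fourier coefficients. -/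
def MemHplus (f : AddCircle (2 * Real.pi) → ℂ) : Prop :=
  MemLp f 2 haarAddCircle ∧ ∀ n : ℤ, n < 0 → fourierCoeff f n = 0

/-- `f ∈ H²_-`: vanishing nonnegative Fourier coefficients. -/
def MemHminus (f : AddCircle (2 * Real.pi) → ℂ) : Prop :=
  MemLp f 2 haarAddCircle ∧ ∀ n : ℤ, 0 ≤ n → fourierCoeff f n = 0

/-- An outer function in `H²`, characterized among Hardy-class functions by the equality
`log |D(0)| = ∫ log |D| dm`, with `D(0)` the zeroth Fourier coefficient. -/
def IsOuterH2 (D : AddCircle (2 * Real.pi) → ℂ) : Prop :=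
  MemHplus D ∧
    Real.log (‖fourierCoeff D 0‖) =
      ∫ x, Real.log (‖D x‖) ∂haarAddCircle

lemma fc_add {f g : AddCircle (2*Real.pi) → ℂ}
    (hf : Integrable f haarAddCircle) (hg : Integrable g haarAddCircle) (n : ℤ) :
    fourierCoeff (fun x => f x + g x) n = fourierCoeff f n + fourierCoeff g n := by
  unfold fourierCoeff
  rw [← integral_add]
  · congr 1; ext x; simp [smul_eq_mul]; ring
  · exact (hf.bdd_mul (c := 1) (map_continuous (fourier (-n))).aestronglyMeasurable
      (Filter.Eventually.of_forall fun x => by simp [Circle.norm_coe])).congr (by simp [smul_eq_mul])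
  · exact (hg.bdd_mul (c := 1) (map_continuous (fourier (-n))).aestronglyMeasurable
      (Filter.Eventually.of_forall fun x => by simp [Circle.norm_coe])).congr (by simp [smul_eq_mul])

lemma fc_conj (f : AddCircle (2*Real.pi) → ℂ) (n : ℤ) :
    fourierCoeff (fun x => conj (f x)) n = conj (fourierCoeff f (-n)) := by
  unfold fourierCoeff
  rw [← integral_conj]
  congr 1; ext x
  simp [smul_eq_mul, ← fourier_neg, map_mul]

lemma fc_congr {f g : AddCircle (2*Real.pi) → ℂ}
    (h : f =ᵐ[haarAddCircle] g) (n : ℤ) : fourierCoeff f n = fourierCoeff g n := by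
  unfold fourierCoeff
  exact integral_congr_ae (h.mono fun x hx => by simp only [hx])

lemma unit_mul_conj {z : ℂ} (h : ‖z‖ = 1) : z * conj z = 1 := by
  rw [Complex.mul_conj]; norm_cast; rw [Complex.normSq_eq_norm_sq]
  simp [h]

theorem stmt5 (s D D' : AddCircle (2 * Real.pi) → ℂ) (α α' : ℂ)
    (hα : ‖α‖ = 1) (hα' : ‖α'‖ = 1)
    (hs : ∀ᵐ x ∂haarAddCircle, ‖s x‖ = 1)
    (hcan : ∀ hp hm : AddCircle (2 * Real.pi) → ℂ, MemHplus hp → MemHminus hm →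
      (∀ᵐ x ∂haarAddCircle, conj (s x) * hp x = hm x) →
      hp =ᵐ[haarAddCircle] 0 ∧ hm =ᵐ[haarAddCircle] 0)
    (hD : IsOuterH2 D) (hD' : IsOuterH2 D')
    (hD0 : 0 < (fourierCoeff D 0).re ∧ (fourierCoeff D 0).im = 0)
    (hD0' : 0 < (fourierCoeff D' 0).re ∧ (fourierCoeff D' 0).im = 0)
    (hnorm : ∫ x, ‖D x‖ ^ 2 ∂haarAddCircle = 1)
    (hnorm' : ∫ x, ‖D' x‖ ^ 2 ∂haarAddCircle = 1)
    (hsD : ∀ᵐ x ∂haarAddCircle, s x = -conj α * (D x / conj (D x)))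
    (hsD' : ∀ᵐ x ∂haarAddCircle, s x = -conj α' * (D' x / conj (D' x))) :
    D =ᵐ[haarAddCircle] D' ∧ α = α' := by
  obtain ⟨⟨hD2, hDneg⟩, -⟩ := hD
  obtain ⟨⟨hD'2, hD'neg⟩, -⟩ := hD'
  set c : ℂ := fourierCoeff D 0 with hcdef
  set c' : ℂ := fourierCoeff D' 0 with hc'def
  have hconjc : conj c = c := Complex.conj_eq_iff_im.2 hD0.2
  have hconjc' : conj c' = c' := Complex.conj_eq_iff_im.2 hD0'.2
  have hcne : c ≠ 0 := fun h => by simp [h] at hD0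
  have hc'ne : c' ≠ 0 := fun h => by simp [h] at hD0'
  have hDint : Integrable D haarAddCircle := hD2.integrable one_le_two
  have hD'int : Integrable D' haarAddCircle := hD'2.integrable one_le_two
  set a : ℂ := -(conj α * c') with hadef
  set b : ℂ := conj α' * c with hbdef
  set hp : AddCircle (2 * Real.pi) → ℂ := fun x => a * D x + b * D' x with hpdef
  set hm : AddCircle (2 * Real.pi) → ℂ := fun x => conj (c' * D x + (-c) * D' x) with hmdef
  have fc_hp : ∀ n : ℤ, fourierCoeff hp n = a * fourierCoeff D n + b * fourierCoeff D' n := by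
    intro n
    rw [hpdef, fc_add (hDint.const_mul a) (hD'int.const_mul b),
      fourierCoeff.const_mul, fourierCoeff.const_mul]
  have fc_in : ∀ n : ℤ, fourierCoeff (fun x => c' * D x + (-c) * D' x) n
      = c' * fourierCoeff D n + (-c) * fourierCoeff D' n := by
    intro n
    rw [fc_add (hDint.const_mul c') (hD'int.const_mul (-c)),
      fourierCoeff.const_mul, fourierCoeff.const_mul]
  have Hp : MemHplus hp := by
    refine ⟨(hD2.const_mul a).add (hD'2.const_mul b), fun n hn => ?_⟩
    rw [fc_hp n, hDneg n hn, hD'neg n hn]; ring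
  have Hm : MemHminus hm := by
    refine ⟨(Complex.conjCLE.toContinuousLinearMap : ℂ →L[ℝ] ℂ).comp_memLp'
      ((hD2.const_mul c').add (hD'2.const_mul (-c))), fun n hn => ?_⟩
    rw [hmdef]
    rw [fc_conj _ n, fc_in (-n)]
    rcases eq_or_lt_of_le hn with h0 | hpos
    · rw [← h0]; simp only [neg_zero, ← hcdef, ← hc'def]
      rw [show c' * c + -c * c' = 0 by ring]; simp
    · rw [hDneg (-n) (by omega), hD'neg (-n) (by omega)]; simp
  have key : ∀ᵐ x ∂haarAddCircle, conj (s x) * hp x = hm x := by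
    filter_upwards [hs, hsD, hsD'] with x h1 h2 h3
    have hDx : D x ≠ 0 := by
      intro h0; rw [h2, h0] at h1; simp at h1
    have hD'x : D' x ≠ 0 := by
      intro h0; rw [h3, h0] at h1; simp at h1
    have hcDx : conj (D x) ≠ 0 := by simpa using hDx
    have hcD'x : conj (D' x) ≠ 0 := by simpa using hD'x
    have hαα : α * conj α = 1 := unit_mul_conj hα
    have hαα' : α' * conj α' = 1 := unit_mul_conj hα'
    have e2 : conj (s x) = -α * (conj (D x) / D x) := by
      rw [h2]; simp [map_mul, map_div₀]
    have e3 : conj (s x) = -α' * (conj (D' x) / D' x) := by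
      rw [h3]; simp [map_mul, map_div₀]
    have lhs : conj (s x) * hp x
        = (-α * (conj (D x) / D x)) * (a * D x) + (-α' * (conj (D' x) / D' x)) * (b * D' x) := by
      rw [hpdef]; dsimp only
      rw [mul_add]
      rw [e2]
      nth_rewrite 2 [e2.symm.trans e3]
      rfl
    have t1 : (-α * (conj (D x) / D x)) * (a * D x) = c' * conj (D x) := by
      rw [hadef]; field_simp
      linear_combination hαα
    have t2 : (-α' * (conj (D' x) / D' x)) * (b * D' x) = -(c * conj (D' x)) := by
      rw [hbdef]; field_simp
      linear_combination (-1 : ℂ) * hαα'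
    rw [lhs, t1, t2, hmdef]
    simp only [map_add, map_mul, map_neg, hconjc, hconjc']
    ring
  obtain ⟨-, hm0⟩ := hcan hp hm Hp Hm key
  have heq : (fun x => c' * D x) =ᵐ[haarAddCircle] (fun x => c * D' x) := by
    filter_upwards [hm0] with x hx
    rw [hmdef] at hx
    simp only [Pi.zero_apply, map_eq_zero] at hx
    linear_combination hx
  -- compare norms of the zeroth coefficients
  have hint : ∫ x, ‖c' * D x‖ ^ 2 ∂haarAddCircle = ∫ x, ‖c * D' x‖ ^ 2 ∂haarAddCircle := by
    exact integral_congr_ae (heq.mono fun x hx => by simp only [hx])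
  have hL : ∫ x, ‖c' * D x‖ ^ 2 ∂haarAddCircle = ‖c'‖ ^ 2 := by
    simp_rw [norm_mul, mul_pow]
    rw [integral_const_mul, hnorm, mul_one]
  have hR : ∫ x, ‖c * D' x‖ ^ 2 ∂haarAddCircle = ‖c‖ ^ 2 := by
    simp_rw [norm_mul, mul_pow]
    rw [integral_const_mul, hnorm', mul_one]
  have hnormeq : ‖c'‖ = ‖c‖ := by
    have h2 : ‖c'‖ ^ 2 = ‖c‖ ^ 2 := by rw [← hL, ← hR, hint]
    nlinarith [norm_nonneg c, norm_nonneg c']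
  have hcc' : c = c' := by
    have h1 : ‖c‖ = ‖c'‖ := by
      rw [hnormeq]
    have h2 : ‖c‖ = c.re := by
      rw [Complex.norm_def, Complex.normSq_apply, hD0.2, mul_zero, add_zero,
        Real.sqrt_mul_self hD0.1.le]
    have h3 : ‖c'‖ = c'.re := by
      rw [Complex.norm_def, Complex.normSq_apply, hD0'.2, mul_zero, add_zero,
        Real.sqrt_mul_self hD0'.1.le]
    apply Complex.ext
    · rw [← h2, ← h3, h1]
    · rw [hD0.2, hD0'.2]
  have hDD' : D =ᵐ[haarAddCircle] D' := by
    filter_upwards [heq] with x hx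
    rw [← hcc'] at hx
    exact mul_left_cancel₀ hcne hx
  refine ⟨hDD', ?_⟩
  -- now extract a point where D x ≠ 0 and all a.e. identities hold
  have hfr : ∃ᵐ x ∂haarAddCircle, D x ≠ 0 := by
    by_contra h
    have hz : ∀ᵐ x ∂haarAddCircle, D x = 0 := by
      simpa using (Filter.not_frequently.mp h)
    have : c = 0 := by
      rw [hcdef, fc_congr (g := fun _ => (0 : ℂ)) hz 0]
      unfold fourierCoeff; simp
    exact hcne this
  obtain ⟨x, hDx, h2, h3, hxe⟩ := (hfr.and_eventually (hsD.and (hsD'.and hDD'))).exists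
  have hcDx : conj (D x) ≠ 0 := by simpa using hDx
  have hne : D x / conj (D x) ≠ 0 := div_ne_zero hDx hcDx
  rw [← hxe] at h3
  have h4 : -conj α * (D x / conj (D x)) = -conj α' * (D x / conj (D x)) := h2.symm.trans h3
  have h5 : conj α = conj α' := by
    have := mul_right_cancel₀ hne h4
    exact neg_injective this
  have := congrArg conj h5
  simpa using this
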